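/- For the cycle graph C_n on an even number n ≥ 4 of vertices, there exists a bipartition (A,B) of the vertices with |A| = n/2 such that the matrix Γ_AB over F2 is invertible (has rank n/2). -/

import Mathlib

open scoped Classical

/-- The biadjacency matrix `Γ_AB` over `F₂`. -/
noncomputable def gammaAB {V : Type*} [Fintype V] [DecidableEq V]
    (G : SimpleGraph V) (A : Finset V) : Matrix ↥(Aᶜ) ↥A (ZMod 2) :=
  fun b a => if G.Adj (a : V) (b : V) then 1 else 0

/-- The cycle graph `C_n` on the vertex set `ZMod n`. -/
def cycleGraph (n : ℕ) : SimpleGraph (ZMod n) where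
  Adj u v := u ≠ v ∧ (v = u + 1 ∨ u = v + 1)
  symm := ⟨fun u v h => ⟨h.1.symm, h.2.symm⟩⟩
  loopless := ⟨fun v h => h.1 rfl⟩

section helpers
variable {n : ℕ} [NeZero n]

lemma zmod_one_ne_zero (hn : 4 ≤ n) : (1 : ZMod n) ≠ 0 := by
  intro h
  have := congrArg ZMod.val h
  rw [ZMod.val_one'' (by omega), ZMod.val_zero] at this
  exact one_ne_zero this

lemma zmod_two_ne_zero (hn : 4 ≤ n) : (2 : ZMod n) ≠ 0 := by
  intro h
  have h2 : ((2 : ℕ) : ZMod n) = 0 := by push_cast; exact h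
  have := congrArg ZMod.val h2
  rw [ZMod.val_cast_of_lt (by omega), ZMod.val_zero] at this
  exact two_ne_zero this

lemma val_add_one (hn : 4 ≤ n) (j : ZMod n) :
    (j + 1).val = if j.val + 1 = n then 0 else j.val + 1 := by
  rw [ZMod.val_add, ZMod.val_one'' (by omega)]
  have hj : j.val < n := ZMod.val_lt j
  split
  · next h => rw [h, Nat.mod_self]
  · next h => exact Nat.mod_eq_of_lt (by omega)

lemma val_sub_one (hn : 4 ≤ n) (j : ZMod n) :
    (j - 1).val = if j.val = 0 then n - 1 else j.val - 1 := by
  have hneg : (-1 : ZMod n).val = n - 1 := by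
    obtain ⟨m, rfl⟩ : ∃ m, n = m + 1 := ⟨n - 1, by omega⟩
    simpa using ZMod.val_neg_one m
  rw [sub_eq_add_neg, ZMod.val_add, hneg]
  have hj : j.val < n := ZMod.val_lt j
  split
  · next h => rw [h, Nat.zero_add]; exact Nat.mod_eq_of_lt (by omega)
  · next h =>
      have h2 : j.val + (n - 1) = (j.val - 1) + n := by omega
      rw [h2, Nat.add_mod_right]
      exact Nat.mod_eq_of_lt (by omega)

lemma cycle_adj_iff (hn : 4 ≤ n) (u v : ZMod n) :
    (cycleGraph n).Adj u v ↔ u = v + 1 ∨ u = v - 1 := by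
  have h1 : (1 : ZMod n) ≠ 0 := zmod_one_ne_zero hn
  constructor
  · rintro ⟨hne, h | h⟩
    · right; rw [h]; ring
    · left; exact h
  · rintro (h | h)
    · refine ⟨?_, Or.inr h⟩
      intro he; rw [he] at h; exact h1 (by linear_combination -h)
    · refine ⟨?_, Or.inl (by rw [h]; ring)⟩
      intro he; rw [he] at h; exact h1 (by linear_combination h)

lemma sum_single {V : Type*} [Fintype V] [DecidableEq V] (A : Finset V)
    (x : ↥A → ZMod 2) (t : V) :
    (∑ a : ↥A, if (a : V) = t then x a else 0) = if h : t ∈ A then x ⟨t, h⟩ else 0 := by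
  split
  · next h =>
      rw [Finset.sum_eq_single (⟨t, h⟩ : ↥A)]
      · simp
      · intro a _ ha
        rw [if_neg]
        intro he; exact ha (Subtype.ext he)
      · intro hmem; exact absurd (Finset.mem_univ _) hmem
  · next h =>
      apply Finset.sum_eq_zero
      intro a _
      rw [if_neg]
      intro he; exact h (he ▸ a.2)

lemma mulVec_eval (hn : 4 ≤ n) (A : Finset (ZMod n)) (x : ↥A → ZMod 2) (b : ↥(Aᶜ)) :
    (gammaAB (cycleGraph n) A).mulVec x b =
      (if h : (b : ZMod n) + 1 ∈ A then x ⟨(b : ZMod n) + 1, h⟩ else 0) +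
      (if h : (b : ZMod n) - 1 ∈ A then x ⟨(b : ZMod n) - 1, h⟩ else 0) := by
  have hdisj : (b : ZMod n) + 1 ≠ (b : ZMod n) - 1 := by
    intro h
    exact zmod_two_ne_zero hn (by linear_combination h)
  unfold Matrix.mulVec dotProduct gammaAB
  have key : ∀ a : ↥A,
      (if (cycleGraph n).Adj (a : ZMod n) (b : ZMod n) then (1 : ZMod 2) else 0) * x a =
      (if (a : ZMod n) = (b : ZMod n) + 1 then x a else 0) +
      (if (a : ZMod n) = (b : ZMod n) - 1 then x a else 0) := by
    intro a
    rw [if_congr (cycle_adj_iff hn (a : ZMod n) (b : ZMod n)) rfl rfl]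
    by_cases h1 : (a : ZMod n) = (b : ZMod n) + 1
    · rw [if_pos (Or.inl h1), if_pos h1, if_neg (by rw [h1]; exact hdisj), one_mul, add_zero]
    · by_cases h2 : (a : ZMod n) = (b : ZMod n) - 1
      · rw [if_pos (Or.inr h2), if_pos h2, if_neg h1, one_mul, zero_add]
      · rw [if_neg (by tauto), if_neg h1, if_neg h2, zero_mul, add_zero]
  rw [Finset.sum_congr rfl (fun a _ => key a), Finset.sum_add_distrib, sum_single, sum_single]

end helpers

section main
variable {n : ℕ} [NeZero n]

lemma rank_goal (A : Finset (ZMod n)) (hcard : A.card = n / 2)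
    (hker : ∀ x, (gammaAB (cycleGraph n) A).mulVec x = 0 → x = 0) :
    (gammaAB (cycleGraph n) A).rank = n / 2 := by
  set M := gammaAB (cycleGraph n) A with hM
  have hinj : LinearMap.ker M.mulVecLin = ⊥ := by
    rw [LinearMap.ker_eq_bot']
    intro x hx
    exact hker x (by simpa [Matrix.mulVecLin_apply] using hx)
  have h := LinearMap.finrank_range_add_finrank_ker M.mulVecLin
  rw [hinj, finrank_bot, Module.finrank_fintype_fun_eq_card, Fintype.card_coe, hcard] at h
  rw [Matrix.rank]
  omega

lemma key_step (hn : 4 ≤ n) (A : Finset (ZMod n)) (x : ↥A → ZMod 2)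
    (hx : (gammaAB (cycleGraph n) A).mulVec x = 0) (b : ZMod n) (hb : b ∈ Aᶜ) :
    (if h : b + 1 ∈ A then x ⟨b + 1, h⟩ else 0) +
      (if h : b - 1 ∈ A then x ⟨b - 1, h⟩ else 0) = 0 := by
  have h := congrFun hx ⟨b, hb⟩
  rw [mulVec_eval hn] at h
  exact h

lemma count1 : ∀ t : ℕ, ((Finset.range (4 * t)).filter (fun k => k % 4 < 2)).card = 2 * t := by
  intro t
  induction t with
  | zero => rfl
  | succ t ih =>
      rw [show 4 * (t + 1) = (4 * t + 3) + 1 by ring, Finset.range_add_one, Finset.filter_insert,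
        if_neg (by omega : ¬ ((4 * t + 3) % 4 < 2)),
        show 4 * t + 3 = (4 * t + 2) + 1 from rfl, Finset.range_add_one, Finset.filter_insert,
        if_neg (by omega : ¬ ((4 * t + 2) % 4 < 2)),
        show 4 * t + 2 = (4 * t + 1) + 1 from rfl, Finset.range_add_one, Finset.filter_insert,
        if_pos (by omega : (4 * t + 1) % 4 < 2),
        show 4 * t + 1 = (4 * t) + 1 from rfl, Finset.range_add_one, Finset.filter_insert,
        if_pos (by omega : (4 * t) % 4 < 2),
        Finset.card_insert_of_notMem (by
          simp only [Finset.mem_insert, Finset.mem_filter, Finset.mem_range]; omega),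
        Finset.card_insert_of_notMem (by
          simp only [Finset.mem_filter, Finset.mem_range]; omega), ih]
      omega

lemma count2 : ∀ t : ℕ,
    ((Finset.range (4 * t + 2)).filter (fun k => k % 4 = 2 ∨ k % 4 = 3 ∨ k = 0)).card
      = 2 * t + 1 := by
  intro t
  induction t with
  | zero => decide
  | succ t ih =>
      rw [show 4 * (t + 1) + 2 = (4 * t + 5) + 1 by ring, Finset.range_add_one, Finset.filter_insert,
        if_neg (by omega : ¬ ((4 * t + 5) % 4 = 2 ∨ (4 * t + 5) % 4 = 3 ∨ 4 * t + 5 = 0)),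
        show 4 * t + 5 = (4 * t + 4) + 1 from rfl, Finset.range_add_one, Finset.filter_insert,
        if_neg (by omega : ¬ ((4 * t + 4) % 4 = 2 ∨ (4 * t + 4) % 4 = 3 ∨ 4 * t + 4 = 0)),
        show 4 * t + 4 = (4 * t + 3) + 1 from rfl, Finset.range_add_one, Finset.filter_insert,
        if_pos (by omega : (4 * t + 3) % 4 = 2 ∨ (4 * t + 3) % 4 = 3 ∨ 4 * t + 3 = 0),
        show 4 * t + 3 = (4 * t + 2) + 1 from rfl, Finset.range_add_one, Finset.filter_insert,
        if_pos (by omega : (4 * t + 2) % 4 = 2 ∨ (4 * t + 2) % 4 = 3 ∨ 4 * t + 2 = 0),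
        Finset.card_insert_of_notMem (by
          simp only [Finset.mem_insert, Finset.mem_filter, Finset.mem_range]; omega),
        Finset.card_insert_of_notMem (by
          simp only [Finset.mem_filter, Finset.mem_range]; omega), ih]
      omega

lemma card_filter_val (p : ℕ → Prop) [DecidablePred p] :
    ((Finset.univ : Finset (ZMod n)).filter (fun j => p j.val)).card
      = ((Finset.range n).filter p).card := by
  apply Finset.card_bij (fun j _ => j.val)
  · intro a ha
    simp only [Finset.mem_filter, Finset.mem_range]
    exact ⟨ZMod.val_lt a, (Finset.mem_filter.mp ha).2⟩
  · intro a _ b _ h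
    exact ZMod.val_injective n h
  · intro k hk
    rw [Finset.mem_filter, Finset.mem_range] at hk
    refine ⟨(k : ZMod n), ?_, ZMod.val_cast_of_lt hk.1⟩
    simp only [Finset.mem_filter, Finset.mem_univ, true_and, ZMod.val_cast_of_lt hk.1]
    exact hk.2

end main

lemma case1 {n : ℕ} [NeZero n] (hn : 4 ≤ n) (h4 : n % 4 = 0) :
    ∃ A : Finset (ZMod n), A.card = n / 2 ∧ (gammaAB (cycleGraph n) A).rank = n / 2 := by
  set A : Finset (ZMod n) := Finset.univ.filter (fun j => j.val % 4 < 2) with hA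
  have memA : ∀ j : ZMod n, (j ∈ A) ↔ j.val % 4 < 2 := fun j => by
    rw [hA, Finset.mem_filter]; simp
  have hcard : A.card = n / 2 := by
    rw [hA, card_filter_val (p := fun k => k % 4 < 2)]
    have hc := count1 (n / 4)
    rw [show 4 * (n / 4) = n by omega] at hc
    rw [hc]; omega
  refine ⟨A, hcard, rank_goal A hcard ?_⟩
  intro x hx
  funext a
  have ha : (a : ZMod n).val % 4 < 2 := (memA _).mp a.2
  have hvlt : (a : ZMod n).val < n := ZMod.val_lt _
  simp only [Pi.zero_apply]
  rcases (by omega : (a : ZMod n).val % 4 = 0 ∨ (a : ZMod n).val % 4 = 1) with h | h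
  · -- use row b = a - 1
    have hb : ((a : ZMod n) - 1) ∈ Aᶜ := by
      rw [Finset.mem_compl, memA, val_sub_one hn]
      split_ifs <;> omega
    have e := key_step hn A x hx ((a : ZMod n) - 1) hb
    have h1 : ((a : ZMod n) - 1 + 1) = (a : ZMod n) := by ring
    have h2 : ((a : ZMod n) - 1 - 1) ∉ A := by
      rw [memA, val_sub_one hn, val_sub_one hn]
      split_ifs <;> omega
    rw [h1, dif_pos a.2, dif_neg h2, add_zero] at e
    simpa using e
  · -- use row b = a + 1
    have hb : ((a : ZMod n) + 1) ∈ Aᶜ := by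
      rw [Finset.mem_compl, memA, val_add_one hn]
      split_ifs <;> omega
    have e := key_step hn A x hx ((a : ZMod n) + 1) hb
    have h1 : ((a : ZMod n) + 1 - 1) = (a : ZMod n) := by ring
    have h2 : ((a : ZMod n) + 1 + 1) ∉ A := by
      rw [memA, val_add_one hn, val_add_one hn]
      split_ifs <;> omega
    rw [dif_neg h2, h1, dif_pos a.2, zero_add] at e
    simpa using e

lemma case2 {n : ℕ} [NeZero n] (hn : 4 ≤ n) (h4 : n % 4 = 2) :
    ∃ A : Finset (ZMod n), A.card = n / 2 ∧ (gammaAB (cycleGraph n) A).rank = n / 2 := by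
  set A : Finset (ZMod n) :=
    Finset.univ.filter (fun j => j.val % 4 = 2 ∨ j.val % 4 = 3 ∨ j.val = 0) with hA
  have memA : ∀ j : ZMod n, (j ∈ A) ↔ (j.val % 4 = 2 ∨ j.val % 4 = 3 ∨ j.val = 0) := fun j => by
    rw [hA, Finset.mem_filter]; simp
  have hcard : A.card = n / 2 := by
    rw [hA, card_filter_val (p := fun k => k % 4 = 2 ∨ k % 4 = 3 ∨ k = 0)]
    have hc := count2 (n / 4)
    rw [show 4 * (n / 4) + 2 = n by omega] at hc
    rw [hc]; omega
  refine ⟨A, hcard, rank_goal A hcard ?_⟩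
  intro x hx
  have h0A : (0 : ZMod n) ∈ A := by
    rw [memA, ZMod.val_zero]; tauto
  -- first: the value at 0 vanishes, using row b = -1
  have hzero : ∀ h0 : (0 : ZMod n) ∈ A, x ⟨0, h0⟩ = 0 := by
    intro h0
    have w1 : ((0 : ZMod n) - 1).val = n - 1 := by
      rw [val_sub_one hn, ZMod.val_zero, if_pos rfl]
    have hb : ((0 : ZMod n) - 1) ∈ Aᶜ := by
      rw [Finset.mem_compl, memA, w1]; omega
    have e := key_step hn A x hx ((0 : ZMod n) - 1) hb
    have h1 : ((0 : ZMod n) - 1 + 1) = (0 : ZMod n) := by ring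
    have h2 : ((0 : ZMod n) - 1 - 1) ∉ A := by
      rw [memA, val_sub_one hn, w1, if_neg (by omega)]; omega
    rw [h1, dif_pos h0, dif_neg h2, add_zero] at e
    exact e
  funext a
  have hvlt : (a : ZMod n).val < n := ZMod.val_lt _
  simp only [Pi.zero_apply]
  rcases (memA _).mp a.2 with h | h | h
  · -- val % 4 = 2 : use row b = a - 1
    have hv2 : 2 ≤ (a : ZMod n).val := by omega
    have w1 : ((a : ZMod n) - 1).val = (a : ZMod n).val - 1 := by
      rw [val_sub_one hn, if_neg (by omega)]
    have hb : ((a : ZMod n) - 1) ∈ Aᶜ := by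
      rw [Finset.mem_compl, memA, w1]; omega
    have e := key_step hn A x hx ((a : ZMod n) - 1) hb
    have h1 : ((a : ZMod n) - 1 + 1) = (a : ZMod n) := by ring
    have w2 : ((a : ZMod n) - 1 - 1).val = (a : ZMod n).val - 2 := by
      rw [val_sub_one hn, w1, if_neg (by omega)]; omega
    rw [h1, dif_pos a.2] at e
    by_cases hv : (a : ZMod n).val = 2
    · -- then a - 2 = 0 and we use hzero
      have h02 : ((a : ZMod n) - 1 - 1) = (0 : ZMod n) := by
        apply ZMod.val_injective
        rw [w2, ZMod.val_zero, hv]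
      rw [h02, dif_pos h0A, hzero h0A, add_zero] at e
      simpa using e
    · have h2 : ((a : ZMod n) - 1 - 1) ∉ A := by
        rw [memA, w2]; omega
      rw [dif_neg h2, add_zero] at e
      simpa using e
  · -- val % 4 = 3 : use row b = a + 1
    have w1 : ((a : ZMod n) + 1).val = (a : ZMod n).val + 1 := by
      rw [val_add_one hn, if_neg (by omega)]
    have hb : ((a : ZMod n) + 1) ∈ Aᶜ := by
      rw [Finset.mem_compl, memA, w1]; omega
    have e := key_step hn A x hx ((a : ZMod n) + 1) hb
    have h1 : ((a : ZMod n) + 1 - 1) = (a : ZMod n) := by ring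
    have w2 : ((a : ZMod n) + 1 + 1).val = (a : ZMod n).val + 2 := by
      rw [val_add_one hn, w1, if_neg (by omega)]
    have h2 : ((a : ZMod n) + 1 + 1) ∉ A := by
      rw [memA, w2]; omega
    rw [dif_neg h2, h1, dif_pos a.2, zero_add] at e
    simpa using e
  · -- val = 0 : a is the vertex 0
    have h0 : (a : ZMod n) = 0 := by
      apply ZMod.val_injective
      rw [h, ZMod.val_zero]
    have ha' : a = ⟨(0 : ZMod n), h0A⟩ := Subtype.ext h0
    rw [ha']
    exact hzero h0A


/-- For the cycle on an even number `n ≥ 4` of vertices there is a bipartition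
`(A, Aᶜ)` with `|A| = n/2` such that `Γ_AB` is invertible over `F₂`,
i.e. has rank `n/2`. -/
theorem cycle_even_exists_full_rank_bipartition (n : ℕ) [NeZero n]
    (hn : 4 ≤ n) (heven : Even n) :
    ∃ A : Finset (ZMod n), A.card = n / 2 ∧ (gammaAB (cycleGraph n) A).rank = n / 2 := by
  have h4 : n % 4 = 0 ∨ n % 4 = 2 := by
    obtain ⟨m, hm⟩ := heven; omega
  rcases h4 with h4 | h4
  · exact case1 hn h4
  · exact case2 hn h4
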